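/- In classical propositional logic with variables and parameters, the following are equivalent for a formula A: (1) A is unifiable; (2) A is projective; (3) the uniform post-interpolant of A with respect to the parameters is ⊤ (i.e. every variable-free classical consequence of A is a tautology). -/

import Mathlib

inductive Form (var par : Type) : Type where
  | bot : Form var par
  | v : var → Form var par
  | p : par → Form var par
  | and : Form var par → Form var par → Form var par
  | or : Form var par → Form var par → Form var par
  | imp : Form var par → Form var par → Form var par

namespace Form
variable {var par : Type}

def neg (A : Form var par) : Form var par := A.imp .bot
def top : Form var par := Form.neg .bot
def fiff (A B : Form var par) : Form var par := (A.imp B).and (B.imp A)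

/-- `varFree A`: `A` contains no variables (it lies in the parameter-only sublanguage). -/
def varFree : Form var par → Prop
  | .bot => True
  | .v _ => False
  | .p _ => True
  | .and A B => varFree A ∧ varFree B
  | .or A B => varFree A ∧ varFree B
  | .imp A B => varFree A ∧ varFree B

/-- Substitutions act on variables, fix parameters, and commute with connectives. -/
def subst (θ : var → Form var par) : Form var par → Form var par
  | .bot => .bot
  | .v x => θ x
  | .p q => .p q
  | .and A B => (subst θ A).and (subst θ B)
  | .or A B => (subst θ A).or (subst θ B)
  | .imp A B => (subst θ A).imp (subst θ B)

end Form

/-- Hilbert-style provability: `cl = false` is intuitionistic logic (IPC),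
`cl = true` is classical logic (CPC). -/
inductive Prv {var par : Type} (cl : Bool) : Form var par → Prop where
  | mp {A B : Form var par} : Prv cl (A.imp B) → Prv cl A → Prv cl B
  | k {A B : Form var par} : Prv cl (A.imp (B.imp A))
  | s {A B C : Form var par} :
      Prv cl ((A.imp (B.imp C)).imp ((A.imp B).imp (A.imp C)))
  | andI {A B : Form var par} : Prv cl (A.imp (B.imp (A.and B)))
  | andE1 {A B : Form var par} : Prv cl ((A.and B).imp A)
  | andE2 {A B : Form var par} : Prv cl ((A.and B).imp B)
  | orI1 {A B : Form var par} : Prv cl (A.imp (A.or B))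
  | orI2 {A B : Form var par} : Prv cl (B.imp (A.or B))
  | orE {A B C : Form var par} :
      Prv cl ((A.imp C).imp ((B.imp C).imp ((A.or B).imp C)))
  | exf {A : Form var par} : Prv cl (Form.bot.imp A)
  | dne {A : Form var par} : cl = true → Prv cl (A.neg.neg.imp A)

/-- `U` is the uniform post-interpolant of `A` with respect to the parameters. -/
def IsUPI {var par : Type} (cl : Bool) (A U : Form var par) : Prop :=
  U.varFree ∧ Prv cl (A.imp U) ∧
    ∀ C : Form var par, C.varFree → Prv cl (A.imp C) → Prv cl (U.imp C)

section Basic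
open Classical
variable {var par : Type}

/-- Derivability from a list of hypotheses. -/
inductive Der : List (Form var par) → Form var par → Prop where
  | hyp {Γ A} : A ∈ Γ → Der Γ A
  | mp {Γ} {A B : Form var par} : Der Γ (A.imp B) → Der Γ A → Der Γ B
  | prv {Γ} {A : Form var par} : Prv true A → Der Γ A

lemma prv_imp_self (A : Form var par) : Prv true (A.imp A) :=
  Prv.mp (Prv.mp (Prv.s (B := A.imp A) (C := A)) Prv.k) Prv.k

lemma Der.weak {Γ Δ : List (Form var par)} {A : Form var par}
    (h : Der Γ A) (hs : ∀ B ∈ Γ, B ∈ Δ) : Der Δ A := by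
  induction h with
  | hyp h => exact .hyp (hs _ h)
  | mp _ _ ih1 ih2 => exact .mp ih1 ih2
  | prv h => exact .prv h

lemma deduction_aux {Δ : List (Form var par)} {A : Form var par}
    (h : Der Δ A) : ∀ Γ (B : Form var par), Δ = B :: Γ → Der Γ (B.imp A) := by
  induction h with
  | hyp h =>
    intro Γ B hΔ
    subst hΔ
    rcases List.mem_cons.1 h with h | h
    · subst h; exact .prv (prv_imp_self _)
    · exact .mp (.prv Prv.k) (.hyp h)
  | mp _ _ ih1 ih2 =>
    intro Γ B hΔ
    exact .mp (.mp (.prv Prv.s) (ih1 Γ B hΔ)) (ih2 Γ B hΔ)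
  | prv h =>
    intro Γ B hΔ
    exact .mp (.prv Prv.k) (.prv h)

lemma deduction {Γ : List (Form var par)} {A B : Form var par}
    (h : Der (B :: Γ) A) : Der Γ (B.imp A) := deduction_aux h Γ B rfl

lemma der_nil_aux {Γ : List (Form var par)} {A : Form var par}
    (h : Der Γ A) : Γ = [] → Prv true A := by
  induction h with
  | hyp h => intro hΓ; subst hΓ; simp at h
  | mp _ _ ih1 ih2 => intro hΓ; exact Prv.mp (ih1 hΓ) (ih2 hΓ)
  | prv h => intro _; exact h

lemma der_nil {A : Form var par} (h : Der ([] : List (Form var par)) A) : Prv true A :=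
  der_nil_aux h rfl

/-- classical case split -/
lemma der_cases {Γ : List (Form var par)} {A B : Form var par}
    (h1 : Der (B :: Γ) A) (h2 : Der (B.neg :: Γ) A) : Der Γ A := by
  have d1 : Der Γ (B.imp A) := deduction h1
  have d2 : Der Γ (B.neg.imp A) := deduction h2
  have key : Prv true ((B.imp A).imp ((B.neg.imp A).imp A)) := by
    apply der_nil
    apply deduction; apply deduction
    apply Der.mp (Der.prv (Prv.dne rfl))
    apply deduction
    -- [A.neg, B.neg.imp A, B.imp A] ⊢ bot
    have hna : Der [Form.neg A, (Form.neg B).imp A, B.imp A] (Form.neg A) :=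
      .hyp (by simp [Form.neg])
    have hnBA : Der [Form.neg A, (Form.neg B).imp A, B.imp A] ((Form.neg B).imp A) :=
      .hyp (by simp [Form.neg])
    have hnB : Der [Form.neg A, (Form.neg B).imp A, B.imp A] (Form.neg B) := by
      apply deduction
      exact .mp (Der.hyp (A := Form.neg A) (by simp [Form.neg]))
        (.mp (Der.hyp (A := B.imp A) (by simp)) (.hyp (by simp)))
    exact .mp hna (.mp hnBA hnB)
  exact .mp (.mp (.prv key) d1) d2

end Basic
section Semantics
open Classical
variable {var par : Type}

/-- Boolean evaluation. -/
def evalF (w : var ⊕ par → Bool) : Form var par → Bool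
  | .bot => false
  | .v x => w (.inl x)
  | .p q => w (.inr q)
  | .and A B => evalF w A && evalF w B
  | .or A B => evalF w A || evalF w B
  | .imp A B => !evalF w A || evalF w B

lemma soundness {A : Form var par} (h : Prv true A) : ∀ w, evalF w A = true := by
  induction h with
  | mp _ _ ih1 ih2 =>
    intro w
    have h1 := ih1 w
    have h2 := ih2 w
    simp only [evalF, h2, Bool.not_true, Bool.false_or] at h1
    exact h1
  | @k A B => intro w; cases hA : evalF w A <;> simp [evalF, hA]
  | @s A B C =>
    intro w
    cases hA : evalF w A <;> cases hB : evalF w B <;> cases hC : evalF w C <;>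
      simp [evalF, hA, hB, hC]
  | @andI A B => intro w; cases hA : evalF w A <;> cases hB : evalF w B <;> simp [evalF, hA, hB]
  | @andE1 A B => intro w; cases hA : evalF w A <;> cases hB : evalF w B <;> simp [evalF, hA, hB]
  | @andE2 A B => intro w; cases hA : evalF w A <;> cases hB : evalF w B <;> simp [evalF, hA, hB]
  | @orI1 A B => intro w; cases hA : evalF w A <;> cases hB : evalF w B <;> simp [evalF, hA, hB]
  | @orI2 A B => intro w; cases hA : evalF w A <;> cases hB : evalF w B <;> simp [evalF, hA, hB]
  | @orE A B C =>
    intro w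
    cases hA : evalF w A <;> cases hB : evalF w B <;> cases hC : evalF w C <;>
      simp [evalF, hA, hB, hC]
  | @exf A => intro w; simp [evalF]
  | @dne A _ => intro w; cases hA : evalF w A <;> simp [evalF, Form.neg, hA]

def atomF : var ⊕ par → Form var par
  | .inl x => .v x
  | .inr q => .p q

def litF (w : var ⊕ par → Bool) (a : var ⊕ par) : Form var par :=
  if w a then atomF a else (atomF a).neg

def atomsOf : Form var par → List (var ⊕ par)
  | .bot => []
  | .v x => [.inl x]
  | .p q => [.inr q]
  | .and A B => atomsOf A ++ atomsOf B
  | .or A B => atomsOf A ++ atomsOf B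
  | .imp A B => atomsOf A ++ atomsOf B

/-- some derived Hilbert facts used in Kalmár's lemma -/
lemma prv_nand1 (A B : Form var par) : Prv true (A.neg.imp (A.and B).neg) := by
  apply der_nil; apply deduction; apply deduction
  exact .mp (Der.hyp (A := A.neg) (by simp [Form.neg]))
    (.mp (.prv Prv.andE1) (Der.hyp (A := A.and B) (by simp)))

lemma prv_nand2 (A B : Form var par) : Prv true (B.neg.imp (A.and B).neg) := by
  apply der_nil; apply deduction; apply deduction
  exact .mp (Der.hyp (A := B.neg) (by simp [Form.neg]))
    (.mp (.prv Prv.andE2) (Der.hyp (A := A.and B) (by simp)))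

lemma prv_nor (A B : Form var par) : Prv true (A.neg.imp (B.neg.imp (A.or B).neg)) := by
  apply der_nil; apply deduction; apply deduction
  exact .mp (.mp (.prv (Prv.orE (C := .bot)))
      (.hyp (by simp [Form.neg]))) (.hyp (by simp [Form.neg]))

lemma prv_na_imp (A B : Form var par) : Prv true (A.neg.imp (A.imp B)) := by
  apply der_nil; apply deduction; apply deduction
  exact .mp (.prv Prv.exf)
    (.mp (Der.hyp (A := A.neg) (by simp [Form.neg])) (Der.hyp (A := A) (by simp)))

lemma prv_nimp (A B : Form var par) : Prv true (A.imp (B.neg.imp (A.imp B).neg)) := by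
  apply der_nil; apply deduction; apply deduction; apply deduction
  exact .mp (Der.hyp (A := B.neg) (by simp [Form.neg]))
    (.mp (.hyp (by simp)) (Der.hyp (A := A) (by simp)))

lemma kalmar (w : var ⊕ par → Bool) :
    ∀ (A : Form var par) (Γ : List (Form var par)),
      (∀ a ∈ atomsOf A, litF w a ∈ Γ) →
      Der Γ (if evalF w A then A else A.neg) := by
  intro A
  induction A with
  | bot =>
    intro Γ _
    exact .prv (prv_imp_self Form.bot)
  | v x =>
    intro Γ hΓ
    have := hΓ (.inl x) (by simp [atomsOf])
    cases hw : w (.inl x) <;> simp [litF, atomF, evalF, hw] at this ⊢ <;> exact Der.hyp this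
  | p q =>
    intro Γ hΓ
    have := hΓ (.inr q) (by simp [atomsOf])
    cases hw : w (.inr q) <;> simp [litF, atomF, evalF, hw] at this ⊢ <;> exact Der.hyp this
  | and A B ihA ihB =>
    intro Γ hΓ
    have hA := ihA Γ (fun a ha => hΓ a (by simp [atomsOf, ha]))
    have hB := ihB Γ (fun a ha => hΓ a (by simp [atomsOf, ha]))
    cases hvA : evalF w A <;> cases hvB : evalF w B <;>
      simp only [hvA, hvB, if_true, if_false, Bool.false_and, Bool.true_and,
        Bool.and_self, evalF] at hA hB ⊢
    · exact .mp (.prv (prv_nand1 A B)) hA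
    · exact .mp (.prv (prv_nand1 A B)) hA
    · exact .mp (.prv (prv_nand2 A B)) hB
    · exact .mp (.mp (.prv Prv.andI) hA) hB
  | or A B ihA ihB =>
    intro Γ hΓ
    have hA := ihA Γ (fun a ha => hΓ a (by simp [atomsOf, ha]))
    have hB := ihB Γ (fun a ha => hΓ a (by simp [atomsOf, ha]))
    cases hvA : evalF w A <;> cases hvB : evalF w B <;>
      simp only [hvA, hvB, if_true, if_false, Bool.false_or, Bool.true_or,
        Bool.or_self, evalF] at hA hB ⊢
    · exact .mp (.mp (.prv (prv_nor A B)) hA) hB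
    · exact .mp (.prv Prv.orI2) hB
    · exact .mp (.prv Prv.orI1) hA
    · exact .mp (.prv Prv.orI1) hA
  | imp A B ihA ihB =>
    intro Γ hΓ
    have hA := ihA Γ (fun a ha => hΓ a (by simp [atomsOf, ha]))
    have hB := ihB Γ (fun a ha => hΓ a (by simp [atomsOf, ha]))
    cases hvA : evalF w A <;> cases hvB : evalF w B <;>
      simp only [hvA, hvB, if_true, if_false, Bool.not_true, Bool.not_false,
        Bool.false_or, Bool.true_or, Bool.or_self, Bool.or_false, Bool.or_true, evalF] at hA hB ⊢
    · exact .mp (.prv (prv_na_imp A B)) hA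
    · exact .mp (.prv (prv_na_imp A B)) hA
    · exact .mp (.mp (.prv (prv_nimp A B)) hA) hB
    · exact .mp (.prv Prv.k) hB

lemma elim_atoms (A : Form var par) :
    ∀ l : List (var ⊕ par), (∀ w, Der (l.map (litF w)) A) → Prv true A := by
  intro l
  induction l with
  | nil => intro h; exact der_nil (by simpa using h (fun _ => true))
  | cons a l ih =>
    intro h
    apply ih
    intro w
    set w1 : var ⊕ par → Bool := (fun b => if b = a then true else w b) with hw1
    set w0 : var ⊕ par → Bool := (fun b => if b = a then false else w b) with hw0
    have e1 : litF w1 a = atomF a := by simp [litF, hw1]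
    have e0 : litF w0 a = (atomF a).neg := by simp [litF, hw0]
    have sub1 : ∀ B ∈ (a :: l).map (litF w1), B ∈ atomF a :: l.map (litF w) := by
      intro B hB
      simp only [List.map_cons, List.mem_cons, List.mem_map] at hB ⊢
      rcases hB with hB | ⟨c, hc, rfl⟩
      · exact Or.inl (by rw [hB, e1])
      · by_cases hca : c = a
        · subst hca; exact Or.inl e1
        · exact Or.inr ⟨c, hc, by simp [litF, hw1, hca]⟩
    have sub0 : ∀ B ∈ (a :: l).map (litF w0), B ∈ (atomF a).neg :: l.map (litF w) := by
      intro B hB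
      simp only [List.map_cons, List.mem_cons, List.mem_map] at hB ⊢
      rcases hB with hB | ⟨c, hc, rfl⟩
      · exact Or.inl (by rw [hB, e0])
      · by_cases hca : c = a
        · subst hca; exact Or.inl e0
        · exact Or.inr ⟨c, hc, by simp [litF, hw0, hca]⟩
    have d1 : Der (atomF a :: l.map (litF w)) A := (h w1).weak sub1
    have d0 : Der ((atomF a).neg :: l.map (litF w)) A := (h w0).weak sub0
    exact der_cases d1 d0

lemma completeness {A : Form var par} (h : ∀ w, evalF w A = true) : Prv true A := by
  apply elim_atoms A (atomsOf A)
  intro w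
  have := kalmar w A ((atomsOf A).map (litF w)) (fun a ha => List.mem_map_of_mem ha)
  rwa [h w, if_pos rfl] at this

end Semantics
section Subst
open Classical
variable {var par : Type}

lemma prv_subst {cl : Bool} {A : Form var par} (θ : var → Form var par)
    (h : Prv cl A) : Prv cl (Form.subst θ A) := by
  induction h with
  | mp _ _ ih1 ih2 => exact Prv.mp ih1 ih2
  | k => exact Prv.k
  | s => exact Prv.s
  | andI => exact Prv.andI
  | andE1 => exact Prv.andE1
  | andE2 => exact Prv.andE2
  | orI1 => exact Prv.orI1
  | orI2 => exact Prv.orI2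
  | orE => exact Prv.orE
  | exf => exact Prv.exf
  | dne h => exact Prv.dne h

lemma subst_varFree {A : Form var par} (h : A.varFree) (θ : var → Form var par) :
    Form.subst θ A = A := by
  induction A with
  | bot => rfl
  | v x => exact absurd h (by simp [Form.varFree])
  | p q => rfl
  | and A B ihA ihB => simp [Form.subst, ihA h.1, ihB h.2]
  | or A B ihA ihB => simp [Form.subst, ihA h.1, ihB h.2]
  | imp A B ihA ihB => simp [Form.subst, ihA h.1, ihB h.2]

lemma subst_subst (σ τ : var → Form var par) (A : Form var par) :
    Form.subst σ (Form.subst τ A) = Form.subst (fun y => Form.subst σ (τ y)) A := by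
  induction A with
  | bot => rfl
  | v x => rfl
  | p q => rfl
  | and A B ihA ihB => simp [Form.subst, ihA, ihB]
  | or A B ihA ihB => simp [Form.subst, ihA, ihB]
  | imp A B ihA ihB => simp [Form.subst, ihA, ihB]

def extw (w : var ⊕ par → Bool) (θ : var → Form var par) : var ⊕ par → Bool :=
  fun a => match a with
  | .inl x => evalF w (θ x)
  | .inr q => w (.inr q)

lemma evalF_subst (w : var ⊕ par → Bool) (θ : var → Form var par) (A : Form var par) :
    evalF w (Form.subst θ A) = evalF (extw w θ) A := by
  induction A with
  | bot => rfl
  | v x => rfl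
  | p q => rfl
  | and A B ihA ihB => simp [Form.subst, evalF, ihA, ihB]
  | or A B ihA ihB => simp [Form.subst, evalF, ihA, ihB]
  | imp A B ihA ihB => simp [Form.subst, evalF, ihA, ihB]

def varList : Form var par → List var
  | .bot => []
  | .v x => [x]
  | .p _ => []
  | .and A B => varList A ++ varList B
  | .or A B => varList A ++ varList B
  | .imp A B => varList A ++ varList B

lemma varFree_of_varList_nil {A : Form var par} (h : ∀ x, x ∉ varList A) : A.varFree := by
  induction A with
  | bot => trivial
  | v x => exact absurd (by simp [varList]) (h x)
  | p q => trivial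
  | and A B ihA ihB =>
    exact ⟨ihA (fun x hx => h x (by simp [varList, hx])),
           ihB (fun x hx => h x (by simp [varList, hx]))⟩
  | or A B ihA ihB =>
    exact ⟨ihA (fun x hx => h x (by simp [varList, hx])),
           ihB (fun x hx => h x (by simp [varList, hx]))⟩
  | imp A B ihA ihB =>
    exact ⟨ihA (fun x hx => h x (by simp [varList, hx])),
           ihB (fun x hx => h x (by simp [varList, hx]))⟩

lemma mem_varList_subst {θ : var → Form var par} {A : Form var par} {y : var}
    (h : y ∈ varList (Form.subst θ A)) : ∃ x ∈ varList A, y ∈ varList (θ x) := by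
  induction A with
  | bot => simp [varList, Form.subst] at h
  | v x => exact ⟨x, by simp [varList], h⟩
  | p q => simp [varList, Form.subst] at h
  | and A B ihA ihB =>
    simp only [Form.subst, varList, List.mem_append] at h
    rcases h with h | h
    · obtain ⟨x, hx, hy⟩ := ihA h; exact ⟨x, by simp [varList, hx], hy⟩
    · obtain ⟨x, hx, hy⟩ := ihB h; exact ⟨x, by simp [varList, hx], hy⟩
  | or A B ihA ihB =>
    simp only [Form.subst, varList, List.mem_append] at h
    rcases h with h | h
    · obtain ⟨x, hx, hy⟩ := ihA h; exact ⟨x, by simp [varList, hx], hy⟩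
    · obtain ⟨x, hx, hy⟩ := ihB h; exact ⟨x, by simp [varList, hx], hy⟩
  | imp A B ihA ihB =>
    simp only [Form.subst, varList, List.mem_append] at h
    rcases h with h | h
    · obtain ⟨x, hx, hy⟩ := ihA h; exact ⟨x, by simp [varList, hx], hy⟩
    · obtain ⟨x, hx, hy⟩ := ihB h; exact ⟨x, by simp [varList, hx], hy⟩

lemma subst_id (A : Form var par) : Form.subst (fun x => Form.v x) A = A := by
  induction A with
  | bot => rfl
  | v x => rfl
  | p q => rfl
  | and A B ihA ihB => simp [Form.subst, ihA, ihB]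
  | or A B ihA ihB => simp [Form.subst, ihA, ihB]
  | imp A B ihA ihB => simp [Form.subst, ihA, ihB]

end Subst
section ExElim
open Classical
variable {var par : Type}

noncomputable def upd (w : var ⊕ par → Bool) (a : var ⊕ par) (b : Bool) :
    var ⊕ par → Bool := fun c => if c = a then b else w c

noncomputable def sub1 (x : var) (C : Form var par) : var → Form var par :=
  fun y => if y = x then C else .v y

lemma extw_sub1 (w : var ⊕ par → Bool) (x : var) (C : Form var par) :
    extw w (sub1 x C) = upd w (.inl x) (evalF w C) := by
  funext a
  cases a with
  | inl y =>
    by_cases hyx : y = x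
    · subst hyx; simp [extw, sub1, upd]
    · simp [extw, sub1, upd, hyx, evalF]
  | inr q => simp [extw, upd]

lemma eval_sub1 (w : var ⊕ par → Bool) (x : var) (C A : Form var par) :
    evalF w (Form.subst (sub1 x C) A) = evalF (upd w (.inl x) (evalF w C)) A := by
  rw [evalF_subst, extw_sub1]

lemma evalF_top (w : var ⊕ par → Bool) : evalF w (Form.top : Form var par) = true := rfl

lemma upd_self (w : var ⊕ par → Bool) (a : var ⊕ par) : upd w a (w a) = w := by
  funext c
  by_cases hc : c = a
  · subst hc; simp [upd]
  · simp [upd, hc]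

lemma prv_imp_trans {A B C : Form var par} (h1 : Prv true (A.imp B))
    (h2 : Prv true (B.imp C)) : Prv true (A.imp C) := by
  apply der_nil
  apply deduction
  exact .mp (.prv h2) (.mp (.prv h1) (.hyp (by simp)))

lemma exElim : ∀ (l : List var) (A : Form var par), (∀ x ∈ varList A, x ∈ l) →
    ∃ (E : Form var par) (θ : var → Form var par), E.varFree ∧ Prv true (A.imp E) ∧
      ((∀ w, evalF w E = true) → ∀ w, evalF w (Form.subst θ A) = true) := by
  intro l
  induction l with
  | nil =>
    intro A hA
    have hvf : A.varFree := varFree_of_varList_nil (fun x hx => by simpa using hA x hx)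
    exact ⟨A, fun x => .v x, hvf, prv_imp_self A, by intro h w; rw [subst_id]; exact h w⟩
  | cons x l ih =>
    intro A hA
    set At := Form.subst (sub1 x Form.top) A with hAt
    set Af := Form.subst (sub1 x Form.bot) A with hAf
    set A' := At.or Af with hA'
    have hvars : ∀ y ∈ varList A', y ∈ l := by
      intro y hy
      have : y ∈ varList At ∨ y ∈ varList Af := by
        simpa [hA', varList] using hy
      have : ∃ z ∈ varList A, y ∈ varList (sub1 x (Form.top : Form var par) z) ∨
          y ∈ varList (sub1 x (Form.bot : Form var par) z) := by
        rcases this with h | h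
        · obtain ⟨z, hz, hyz⟩ := mem_varList_subst h; exact ⟨z, hz, Or.inl hyz⟩
        · obtain ⟨z, hz, hyz⟩ := mem_varList_subst h; exact ⟨z, hz, Or.inr hyz⟩
      obtain ⟨z, hz, hyz⟩ := this
      by_cases hzx : z = x
      · subst hzx
        rcases hyz with h | h <;>
          simp [sub1, Form.top, Form.neg, varList] at h
      · have hyzeq : y = z := by
          rcases hyz with h | h <;> simpa [sub1, hzx, varList] using h
        subst hyzeq
        rcases List.mem_cons.1 (hA y hz) with h | h
        · exact absurd h hzx
        · exact h
    obtain ⟨E, θ', hE, hImp', hSem'⟩ := ih A' hvars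
    have hAA' : Prv true (A.imp A') := by
      apply completeness
      intro w
      cases hvA : evalF w A
      · simp [evalF, hvA]
      · cases hwx : w (Sum.inl x)
        · have hupd : upd w (Sum.inl x) false = w := by rw [← hwx]; exact upd_self w _
          have hf : evalF w Af = true := by
            rw [hAf, eval_sub1]
            show evalF (upd w (Sum.inl x) false) A = true
            rw [hupd]; exact hvA
          simp [evalF, hf, hA']
        · have hupd : upd w (Sum.inl x) true = w := by rw [← hwx]; exact upd_self w _
          have ht : evalF w At = true := by
            rw [hAt, eval_sub1, evalF_top, hupd]; exact hvA
          simp [evalF, ht, hA']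
    refine ⟨E, fun y => Form.subst θ' (sub1 x At y), hE, prv_imp_trans hAA' hImp', ?_⟩
    intro hTaut w
    have h' := hSem' hTaut
    rw [show Form.subst (fun y => Form.subst θ' (sub1 x At y)) A
        = Form.subst θ' (Form.subst (sub1 x At) A) from (subst_subst θ' (sub1 x At) A).symm]
    rw [evalF_subst]
    set u := extw w θ' with hu'
    have hu : evalF u A' = true := by rw [← evalF_subst]; exact h' w
    rw [eval_sub1]
    have hAtu : evalF u At = evalF (upd u (Sum.inl x) true) A := by
      rw [hAt, eval_sub1, evalF_top]
    cases hb : evalF (upd u (Sum.inl x) true) A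
    · have hAtfalse : evalF u At = false := by rw [hAtu, hb]
      have hAftrue : evalF u Af = true := by
        have := hu
        rw [hA'] at this
        simp only [evalF, hAtfalse, Bool.false_or] at this
        exact this
      rw [hAtfalse]
      have : evalF u Af = evalF (upd u (Sum.inl x) false) A := by
        rw [hAf, eval_sub1]; rfl
      rw [← this]; exact hAftrue
    · have hAttrue : evalF u At = true := by rw [hAtu, hb]
      rw [hAttrue]; exact hb

end ExElim

/-- In classical logic: unifiable ↔ projective ↔ uniform post-interpolant is `⊤`. -/
theorem classical_unif_proj_upi {var par : Type} (A : Form var par) :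
    ((∃ θ : var → Form var par, Prv true (Form.subst θ A)) ↔
      (∃ θ : var → Form var par, Prv true (Form.subst θ A) ∧
        ∀ x : var, Prv true (A.imp ((θ x).fiff (Form.v x))))) ∧
    ((∃ θ : var → Form var par, Prv true (Form.subst θ A)) ↔
      (∀ E : Form var par, E.varFree → Prv true (A.imp E) → Prv true E)) := by
  constructor
  · constructor
    · rintro ⟨θ₀, h₀⟩
      refine ⟨fun x => (A.and (.v x)).or (A.neg.and (θ₀ x)), ?_, ?_⟩
      · apply completeness
        intro w
        rw [evalF_subst]
        cases hA : evalF w A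
        · have he : extw w (fun x => (A.and (.v x)).or (A.neg.and (θ₀ x))) = extw w θ₀ := by
            funext a
            cases a with
            | inl x => simp [extw, evalF, Form.neg, hA]
            | inr q => rfl
          rw [he, ← evalF_subst]; exact soundness h₀ w
        · have he : extw w (fun x => (A.and (.v x)).or (A.neg.and (θ₀ x))) = w := by
            funext a
            cases a with
            | inl x => simp [extw, evalF, Form.neg, hA]
            | inr q => rfl
          rw [he]; exact hA
      · intro x
        apply completeness
        intro w
        cases hA : evalF w A
        · simp [evalF, hA]
        · simp only [evalF, Form.fiff, Form.neg, hA]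
          cases w (Sum.inl x) <;> simp
    · rintro ⟨θ, h, -⟩; exact ⟨θ, h⟩
  · constructor
    · rintro ⟨θ, hθ⟩ E hE hAE
      have h2 := prv_subst θ hAE
      rw [show Form.subst θ (A.imp E) = (Form.subst θ A).imp (Form.subst θ E) from rfl,
        subst_varFree hE] at h2
      exact Prv.mp h2 hθ
    · intro h3
      obtain ⟨E, θ, hE, hImp, hSem⟩ := exElim (varList A) A (fun _ h => h)
      exact ⟨θ, completeness (hSem (soundness (h3 E hE hImp)))⟩
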